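/- Let n ≥ 1 and ω > 0. Let d_i, a_{ij} : ℝ → ℝ (1 ≤ i, j ≤ n, j ≠ i) be continuous ω-periodic functions with d_i(t) > 0 and a_{ij}(t) ≥ 0 for all t ∈ ℝ. Assume there exist a vector u = (u_1, …, u_n) with all u_i > 0 and a time t_0 ∈ ℝ such that d_i(t)u_i ≥ Σ_{j≠i} a_{ij}(t)u_j for all t ∈ ℝ and all i, with strict inequality d_i(t_0)u_i > Σ_{j≠i} a_{ij}(t_0)u_j for all i. Then the linear periodic ODE system x_i'(t) = −d_i(t)x_i(t) + Σ_{j≠i} a_{ij}(t)x_j(t), i = 1, …, n, is exponentially asymptotically stable: there exist constants K ≥ 1 and α > 0 such that for every s ∈ ℝ and every differentiable function x : [s, ∞) → ℝⁿ satisfying the system for all t > s, one has max_i |x_i(t)| ≤ K e^{−α(t−s)} max_i |x_i(s)| for all t ≥ s. -/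

import Mathlib

open Real Set

set_option maxHeartbeats 1000000 in
/-- Exponential asymptotic stability of the cooperative periodic linear ODE
`x_i' = -d_i(t) x_i + ∑_{j≠i} a_{ij}(t) x_j` under (H0)-(H2). -/
theorem stmt0
    (n : ℕ) (hn : 1 ≤ n) (ω : ℝ) (hω : 0 < ω)
    (d : Fin n → ℝ → ℝ) (a : Fin n → Fin n → ℝ → ℝ)
    (hdcont : ∀ i, Continuous (d i))
    (hacont : ∀ i j, j ≠ i → Continuous (a i j))
    (hdper : ∀ i t, d i (t + ω) = d i t)
    (haper : ∀ i j t, j ≠ i → a i j (t + ω) = a i j t)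
    (hdpos : ∀ i t, 0 < d i t)
    (hanneg : ∀ i j t, j ≠ i → 0 ≤ a i j t)
    (u : Fin n → ℝ) (hu : ∀ i, 0 < u i) (t0 : ℝ)
    (hH2 : ∀ i t, ∑ j ∈ Finset.univ.erase i, a i j t * u j ≤ d i t * u i)
    (hH2s : ∀ i, ∑ j ∈ Finset.univ.erase i, a i j t0 * u j < d i t0 * u i) :
    ∃ K ≥ (1 : ℝ), ∃ α > (0 : ℝ), ∀ s : ℝ, ∀ x : ℝ → Fin n → ℝ,
      (∀ i, ContinuousOn (fun t => x t i) (Set.Ici s)) →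
      (∀ t > s, ∀ i, HasDerivAt (fun u' => x u' i)
          (-d i t * x t i + ∑ j ∈ Finset.univ.erase i, a i j t * x t j) t) →
      ∀ t ≥ s, (⨆ i, |x t i|) ≤ K * Real.exp (-α * (t - s)) * ⨆ i, |x s i| := by
  classical
  haveI : Nonempty (Fin n) := ⟨⟨0, hn⟩⟩
  have hne : (Finset.univ : Finset (Fin n)).Nonempty := Finset.univ_nonempty
  -- the decay-rate function
  set c : ℝ → ℝ := fun t => Finset.univ.inf' hne
      (fun i => (d i t * u i - ∑ j ∈ Finset.univ.erase i, a i j t * u j) / u i) with hcdef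
  have hccont : Continuous c := by
    apply Continuous.finset_inf'_apply hne
    intro i _
    exact (((hdcont i).mul continuous_const).sub
      (continuous_finset_sum _ fun j hj =>
        (hacont i j (Finset.mem_erase.mp hj).1).mul continuous_const)).div_const _
  have hcnonneg : ∀ t, 0 ≤ c t := by
    intro t
    apply Finset.le_inf'
    intro i _
    exact div_nonneg (sub_nonneg.2 (hH2 i t)) (hu i).le
  have hckey : ∀ t i, c t * u i ≤ d i t * u i - ∑ j ∈ Finset.univ.erase i, a i j t * u j := by
    intro t i
    have h := Finset.inf'_le (fun i => (d i t * u i -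
      ∑ j ∈ Finset.univ.erase i, a i j t * u j) / u i) (Finset.mem_univ i)
    exact (le_div_iff₀ (hu i)).1 h
  have hcpos0 : 0 < c t0 := by
    rw [hcdef]
    rw [Finset.lt_inf'_iff]
    intro i _
    exact div_pos (sub_pos.2 (hH2s i)) (hu i)
  have hcper : Function.Periodic c ω := by
    intro t
    rw [hcdef]
    apply Finset.inf'_congr hne rfl
    intro i _
    rw [hdper]
    congr 2
    apply Finset.sum_congr rfl
    intro j hj
    rw [haper i j t (Finset.mem_erase.mp hj).1]
  have hcint : ∀ p q : ℝ, IntervalIntegrable c MeasureTheory.volume p q :=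
    fun p q => hccont.intervalIntegrable p q
  -- the integral of c over one period is positive
  set I : ℝ := ∫ τ in t0..t0 + ω, c τ with hIdef
  have hper_int : ∀ p : ℝ, (∫ τ in p..p + ω, c τ) = I := fun p =>
    hcper.intervalIntegral_add_eq p t0
  have hIpos : 0 < I := by
    have hev : ∀ᶠ z in nhds t0, c t0 / 2 < c z :=
      (hccont.continuousAt (x := t0)).eventually_const_lt (by linarith)
    rcases Metric.eventually_nhds_iff.1 hev with ⟨δ', hδ', hball⟩
    set δ := min (δ' / 2) ω with hδdef
    have hδpos : 0 < δ := lt_min (by linarith) hω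
    have hδω : δ ≤ ω := min_le_right _ _
    have hlow : ∀ z ∈ Icc t0 (t0 + δ), c t0 / 2 ≤ c z := by
      intro z hz
      have hδle : δ ≤ δ' / 2 := min_le_left _ _
      have hd : dist z t0 < δ' := by
        rw [Real.dist_eq, abs_lt]
        exact ⟨by linarith [hz.1], by linarith [hz.2]⟩
      exact (hball hd).le
    have h1 : δ * (c t0 / 2) ≤ ∫ τ in t0..t0 + δ, c τ := by
      have := intervalIntegral.integral_mono_on (by linarith : t0 ≤ t0 + δ)
        (intervalIntegrable_const (c := c t0 / 2)) (hcint t0 (t0 + δ)) hlow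
      rwa [intervalIntegral.integral_const, smul_eq_mul, add_sub_cancel_left] at this
    have h2 : (0:ℝ) ≤ ∫ τ in t0 + δ..t0 + ω, c τ :=
      intervalIntegral.integral_nonneg (by linarith) (fun z _ => hcnonneg z)
    have h3 : (∫ τ in t0..t0 + δ, c τ) + ∫ τ in t0 + δ..t0 + ω, c τ = I :=
      intervalIntegral.integral_add_adjacent_intervals (hcint _ _) (hcint _ _)
    nlinarith [mul_pos hδpos (by linarith : (0:ℝ) < c t0 / 2)]
  -- lower bound for the integral of c over any interval
  have hInt_lb : ∀ s t : ℝ, s ≤ t → I / ω * (t - s) - I ≤ ∫ τ in s..t, c τ := by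
    intro s t hst
    set k : ℕ := ⌊(t - s) / ω⌋₊ with hkdef
    have hk1 : (k : ℝ) * ω ≤ t - s := by
      have h := Nat.floor_le (div_nonneg (sub_nonneg.2 hst) hω.le)
      calc (k : ℝ) * ω ≤ (t - s) / ω * ω := mul_le_mul_of_nonneg_right h hω.le
        _ = t - s := div_mul_cancel₀ _ (ne_of_gt hω)
    have hk2 : t - s < ((k : ℝ) + 1) * ω := by
      have h := Nat.lt_floor_add_one ((t - s) / ω)
      rw [div_lt_iff₀ hω] at h
      push_cast at h ⊢
      linarith
    have h1 : (∫ τ in s..s + (k : ℝ) * ω, c τ) = k * I := by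
      have := hcper.intervalIntegral_add_zsmul_eq (k : ℤ) s hcint
      rw [hper_int s] at this
      push_cast at this
      simpa [zsmul_eq_mul] using this
    have h2 : (0:ℝ) ≤ ∫ τ in s + (k : ℝ) * ω..t, c τ :=
      intervalIntegral.integral_nonneg (by linarith) (fun z _ => hcnonneg z)
    have h3 : (∫ τ in s..s + (k : ℝ) * ω, c τ) + ∫ τ in s + (k : ℝ) * ω..t, c τ
        = ∫ τ in s..t, c τ :=
      intervalIntegral.integral_add_adjacent_intervals (hcint _ _) (hcint _ _)
    have h4 : I / ω * (t - s) ≤ ((k : ℝ) + 1) * I := by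
      have := mul_le_mul_of_nonneg_left hk2.le (div_nonneg hIpos.le hω.le)
      calc I / ω * (t - s) ≤ I / ω * (((k : ℝ) + 1) * ω) := this
        _ = ((k : ℝ) + 1) * I := by field_simp
    linarith
  -- constants
  set mu : ℝ := Finset.univ.inf' hne u with hmudef
  set Mu : ℝ := Finset.univ.sup' hne u with hMudef
  have hmupos : 0 < mu := by
    rw [hmudef, Finset.lt_inf'_iff]
    exact fun i _ => hu i
  have hmuMu : mu ≤ Mu :=
    le_trans (Finset.inf'_le _ (Finset.mem_univ (Classical.arbitrary (Fin n))))
      (Finset.le_sup' _ (Finset.mem_univ _))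
  have hMupos : 0 < Mu := lt_of_lt_of_le hmupos hmuMu
  refine ⟨Mu / mu * Real.exp I, ?_, I / ω, div_pos hIpos hω, ?_⟩
  · have h1 : 1 ≤ Mu / mu := (one_le_div hmupos).2 hmuMu
    have h2 : 1 ≤ Real.exp I := Real.one_le_exp hIpos.le
    nlinarith
  intro s X hXcont hXode t hts
  -- the weighted sup function
  set f : ℝ → ℝ := fun τ => Finset.univ.sup' hne (fun i => |X τ i| / u i) with hfdef
  have hg_le_f : ∀ τ i, |X τ i| / u i ≤ f τ := by
    intro τ i
    simp only [hfdef]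
    exact Finset.le_sup' (fun i => |X τ i| / u i) (Finset.mem_univ i)
  have hfnonneg : ∀ τ, 0 ≤ f τ := fun τ =>
    le_trans (div_nonneg (abs_nonneg _) (hu _).le) (hg_le_f τ (Classical.arbitrary _))
  have habs_le : ∀ τ i, |X τ i| ≤ u i * f τ := by
    intro τ i
    have := hg_le_f τ i
    rw [div_le_iff₀ (hu i)] at this
    linarith [this]
  have hfcont : ContinuousOn f (Ici s) := by
    apply ContinuousOn.finset_sup'_apply hne
    intro i _
    exact ((hXcont i).abs).div_const _
  -- the key differential inequality on slopes
  have hslope : ∀ t₁, s < t₁ → ∀ r, -c t₁ * f t₁ < r →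
      ∀ᶠ z in nhdsWithin t₁ (Ioi t₁), slope f t₁ z < r := by
    intro t₁ ht₁s r hr
    have hi : ∀ i, ∀ᶠ z in nhdsWithin t₁ (Ioi t₁), |X z i| / u i < f t₁ + (z - t₁) * r := by
      intro i
      rcases (hg_le_f t₁ i).lt_or_eq with hlt | heq
      · -- this i is not maximal: continuity suffices
        have hca : ContinuousAt (fun z => |X z i| / u i - (z - t₁) * r) t₁ :=
          (((hXode t₁ ht₁s i).continuousAt).abs.div_const (u i)).sub
            ((continuousAt_id.sub continuousAt_const).mul continuousAt_const)
        have htd : Filter.Tendsto (fun z => |X z i| / u i - (z - t₁) * r)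
            (nhdsWithin t₁ (Ioi t₁)) (nhds (|X t₁ i| / u i)) := by
          have h0 : Filter.Tendsto (fun z => |X z i| / u i - (z - t₁) * r)
              (nhdsWithin t₁ (Ioi t₁)) (nhds (|X t₁ i| / u i - (t₁ - t₁) * r)) :=
            hca.tendsto.mono_left nhdsWithin_le_nhds
          simpa using h0
        filter_upwards [htd.eventually_lt_const hlt] with z hz
        linarith
      · -- this i is maximal: use the ODE
        have hv := hXode t₁ ht₁s i
        set v : ℝ := -d i t₁ * X t₁ i + ∑ j ∈ Finset.univ.erase i, a i j t₁ * X t₁ j with hvdef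
        by_cases hzero : X t₁ i = 0
        · -- then f t₁ = 0 and the whole solution vanishes at t₁
          have hf0 : f t₁ = 0 := by rw [← heq, hzero]; simp
          have hX0 : ∀ j, X t₁ j = 0 := by
            intro j
            have h1 := hg_le_f t₁ j
            rw [hf0] at h1
            have h2 : 0 ≤ |X t₁ j| / u j := div_nonneg (abs_nonneg _) (hu j).le
            have h3 : |X t₁ j| / u j = 0 := le_antisymm h1 h2
            rcases div_eq_zero_iff.1 h3 with h | h
            · exact abs_eq_zero.1 h
            · exact absurd h (ne_of_gt (hu j))
          have hr0 : 0 < r := by rw [hf0] at hr; simpa using hr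
          have hst : Filter.Tendsto (fun z => |slope (fun z => X z i) t₁ z| / u i)
              (nhdsWithin t₁ (Ioi t₁)) (nhds 0) := by
            have h0 : Filter.Tendsto (slope (fun z => X z i) t₁) (nhdsWithin t₁ {t₁}ᶜ)
                (nhds v) := hasDerivAt_iff_tendsto_slope.1 hv
            have h1 := h0.mono_left (nhdsWithin_mono _ (fun z hz => ne_of_gt hz))
            have hv0 : v = 0 := by
              rw [hvdef, hzero]
              simp only [mul_zero, neg_zero, zero_add]
              exact Finset.sum_eq_zero fun j _ => by rw [hX0 j, mul_zero]
            rw [hv0] at h1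
            have := (h1.abs).div_const (u i)
            simp only [abs_zero, zero_div] at this; exact this
          filter_upwards [hst.eventually_lt_const hr0, self_mem_nhdsWithin] with z h1 h2
          have h3 : (0:ℝ) < z - t₁ := sub_pos.2 h2
          have h4 : |X z i| / u i = |slope (fun z => X z i) t₁ z| / u i * (z - t₁) := by
            rw [slope_def_field, hzero, sub_zero, abs_div, abs_of_pos h3]
            rw [div_div, mul_comm (z - t₁) (u i), ← div_div, div_mul_cancel₀ _ h3.ne']
          rw [h4, hf0]
          have := mul_lt_mul_of_pos_right h1 h3
          linarith
        · -- X t₁ i ≠ 0: use sign and the dissipativity estimate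
          set σ : ℝ := if 0 < X t₁ i then 1 else -1 with hσdef
          have hσabs : σ * X t₁ i = |X t₁ i| := by
            rw [hσdef]
            split_ifs with h
            · rw [one_mul, abs_of_pos h]
            · rw [abs_of_neg (lt_of_le_of_ne (not_lt.1 h) hzero)]; ring
          have hσ1 : |σ| = 1 := by
            rw [hσdef]; split_ifs <;> simp
          have hXival : |X t₁ i| = u i * f t₁ := by
            rw [← heq]; field_simp [(hu i).ne']
          have hkey : σ * v / u i < r := by
            have step1 : σ * v ≤ -d i t₁ * |X t₁ i| +
                ∑ j ∈ Finset.univ.erase i, a i j t₁ * |X t₁ j| := by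
              rw [hvdef, mul_add, ← hσabs]
              have e1 : σ * (-d i t₁ * X t₁ i) = -d i t₁ * (σ * X t₁ i) := by ring
              rw [e1]
              apply add_le_add le_rfl
              rw [Finset.mul_sum]
              apply Finset.sum_le_sum
              intro j hj
              have hj' := (Finset.mem_erase.mp hj).1
              have : σ * X t₁ j ≤ |X t₁ j| := by
                calc σ * X t₁ j ≤ |σ * X t₁ j| := le_abs_self _
                  _ = |X t₁ j| := by rw [abs_mul, hσ1, one_mul]
              calc σ * (a i j t₁ * X t₁ j) = a i j t₁ * (σ * X t₁ j) := by ring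
                _ ≤ a i j t₁ * |X t₁ j| :=
                    mul_le_mul_of_nonneg_left this (hanneg i j t₁ hj')
            have step2 : -d i t₁ * |X t₁ i| + ∑ j ∈ Finset.univ.erase i, a i j t₁ * |X t₁ j|
                ≤ -(c t₁ * u i) * f t₁ := by
              have e2 : -d i t₁ * |X t₁ i| = -d i t₁ * (u i * f t₁) := by rw [hXival]
              have e3 : ∑ j ∈ Finset.univ.erase i, a i j t₁ * |X t₁ j|
                  ≤ ∑ j ∈ Finset.univ.erase i, a i j t₁ * (u j * f t₁) := by
                apply Finset.sum_le_sum
                intro j hj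
                exact mul_le_mul_of_nonneg_left (habs_le t₁ j)
                  (hanneg i j t₁ (Finset.mem_erase.mp hj).1)
              have e4 : -d i t₁ * (u i * f t₁) +
                  ∑ j ∈ Finset.univ.erase i, a i j t₁ * (u j * f t₁)
                  = -((d i t₁ * u i - ∑ j ∈ Finset.univ.erase i, a i j t₁ * u j) * f t₁) := by
                have e4' : ∑ j ∈ Finset.univ.erase i, a i j t₁ * (u j * f t₁)
                    = (∑ j ∈ Finset.univ.erase i, a i j t₁ * u j) * f t₁ := by
                  rw [Finset.sum_mul]
                  exact Finset.sum_congr rfl fun j _ => by ring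
                rw [e4']
                ring
              have e5 : c t₁ * u i * f t₁ ≤
                  (d i t₁ * u i - ∑ j ∈ Finset.univ.erase i, a i j t₁ * u j) * f t₁ :=
                mul_le_mul_of_nonneg_right (hckey t₁ i) (hfnonneg t₁)
              rw [e2]
              calc -d i t₁ * (u i * f t₁) + ∑ j ∈ Finset.univ.erase i, a i j t₁ * |X t₁ j|
                  ≤ -d i t₁ * (u i * f t₁) +
                    ∑ j ∈ Finset.univ.erase i, a i j t₁ * (u j * f t₁) := by linarith
                _ = -((d i t₁ * u i - ∑ j ∈ Finset.univ.erase i, a i j t₁ * u j) * f t₁) := e4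
                _ ≤ -(c t₁ * u i) * f t₁ := by rw [neg_mul]; linarith
            have : σ * v ≤ -(c t₁ * u i) * f t₁ := le_trans step1 step2
            have h6 : σ * v / u i ≤ -c t₁ * f t₁ := by
              rw [div_le_iff₀ (hu i)]
              calc σ * v ≤ -(c t₁ * u i) * f t₁ := this
                _ = -c t₁ * f t₁ * u i := by ring
            linarith
          have hd2 : HasDerivAt (fun z => σ * X z i / u i) (σ * v / u i) t₁ :=
            (hv.const_mul σ).div_const _
          have hslope2 : Filter.Tendsto (slope (fun z => σ * X z i / u i) t₁)
              (nhdsWithin t₁ (Ioi t₁)) (nhds (σ * v / u i)) :=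
            (hasDerivAt_iff_tendsto_slope.1 hd2).mono_left
              (nhdsWithin_mono _ (fun z hz => ne_of_gt hz))
          have hsign : ∀ᶠ z in nhds t₁, σ * X z i = |X z i| := by
            rcases lt_or_gt_of_ne hzero with hneg | hpos
            · have : ∀ᶠ z in nhds t₁, X z i < 0 :=
                ((hv.continuousAt).eventually_lt_const hneg)
              filter_upwards [this] with z hz
              have hσ' : σ = -1 := by rw [hσdef, if_neg (by linarith)]
              rw [hσ', abs_of_neg hz]; ring
            · have : ∀ᶠ z in nhds t₁, 0 < X z i :=
                ((hv.continuousAt).eventually_const_lt hpos)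
              filter_upwards [this] with z hz
              have hσ' : σ = 1 := by rw [hσdef, if_pos hpos]
              rw [hσ', abs_of_pos hz, one_mul]
          filter_upwards [hslope2.eventually_lt_const hkey,
            hsign.filter_mono nhdsWithin_le_nhds, self_mem_nhdsWithin] with z h1 h2 h3
          rw [slope_def_field, div_lt_iff₀ (sub_pos.2 h3)] at h1
          have h5 : σ * X t₁ i / u i = f t₁ := by rw [hσabs, heq]
          have h6 : |X z i| / u i = σ * X z i / u i := by rw [h2]
          rw [h6]
          nlinarith [h1, h5]
    have hall : ∀ᶠ z in nhdsWithin t₁ (Ioi t₁), ∀ i, |X z i| / u i < f t₁ + (z - t₁) * r :=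
      Filter.eventually_all.2 hi
    filter_upwards [hall, self_mem_nhdsWithin] with z hz hz'
    rw [slope_def_field, div_lt_iff₀ (sub_pos.2 hz')]
    have hfz : f z < f t₁ + (z - t₁) * r := by
      rw [hfdef]
      exact (Finset.sup'_lt_iff hne).2 fun i _ => hz i
    linarith
  -- The Gronwall-type estimate from any s' > s
  have key : ∀ s', s < s' → s' ≤ t → f t ≤ f s' * Real.exp (-(∫ τ in s'..t, c τ)) := by
    intro s' hss' hs't
    have hεstep : ∀ ε, 0 < ε →
        f t ≤ (f s' + ε) * Real.exp (ε * (t - s') - ∫ τ in s'..t, c τ) := by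
      intro ε hε
      set G : ℝ → ℝ := fun z => ∫ τ in s'..z, (ε - c τ) with hGdef
      have hGderiv : ∀ z, HasDerivAt G (ε - c z) z := fun z =>
        ((continuous_const.sub hccont).integral_hasStrictDerivAt s' z).hasDerivAt
      set B : ℝ → ℝ := fun z => (f s' + ε) * Real.exp (G z) with hBdef
      have hBpos : ∀ z, 0 < B z := fun z =>
        mul_pos (by linarith [hfnonneg s']) (Real.exp_pos _)
      have hBderiv : ∀ z, HasDerivAt B ((ε - c z) * B z) z := by
        intro z
        have h := ((hGderiv z).exp).const_mul (f s' + ε)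
        refine h.congr_deriv ?_
        show _ = (ε - c z) * ((f s' + ε) * Real.exp (G z))
        ring
      have hmain := image_le_of_liminf_slope_right_lt_deriv_boundary
        (f := f) (f' := fun z => -c z * f z) (a := s') (b := t)
        (hfcont.mono ((Set.Icc_subset_Ici_self).trans (Set.Ici_subset_Ici.2 hss'.le)))
        (fun z hz r hr => (hslope z (lt_of_lt_of_le hss' hz.1) r hr).frequently)
        (B := B) (B' := fun z => (ε - c z) * B z)
        (by
          have : G s' = 0 := intervalIntegral.integral_same
          rw [hBdef]; simp only [this, Real.exp_zero, mul_one]; linarith)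
        hBderiv
        (fun z _ hfB => by
          have h1 : 0 < B z := hBpos z
          show -c z * f z < (ε - c z) * B z
          rw [hfB]
          nlinarith [mul_pos hε h1])
      have := hmain (right_mem_Icc.2 hs't)
      have hGt : G t = ε * (t - s') - ∫ τ in s'..t, c τ := by
        show (∫ τ in s'..t, (ε - c τ)) = ε * (t - s') - ∫ τ in s'..t, c τ
        rw [intervalIntegral.integral_sub (intervalIntegrable_const) (hcint s' t),
          intervalIntegral.integral_const, smul_eq_mul]
        ring
      simp only [hBdef] at this
      rw [hGt] at this
      exact this
    -- let ε → 0⁺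
    have htend : Filter.Tendsto
        (fun ε => (f s' + ε) * Real.exp (ε * (t - s') - ∫ τ in s'..t, c τ))
        (nhdsWithin 0 (Ioi 0)) (nhds (f s' * Real.exp (-(∫ τ in s'..t, c τ)))) := by
      have hcont : Continuous
          (fun ε : ℝ => (f s' + ε) * Real.exp (ε * (t - s') - ∫ τ in s'..t, c τ)) := by
        continuity
      have h0 : Filter.Tendsto
          (fun ε : ℝ => (f s' + ε) * Real.exp (ε * (t - s') - ∫ τ in s'..t, c τ))
          (nhdsWithin 0 (Ioi 0))
          (nhds ((f s' + 0) * Real.exp (0 * (t - s') - ∫ τ in s'..t, c τ))) :=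
        (hcont.tendsto 0).mono_left nhdsWithin_le_nhds
      simpa using h0
    exact ge_of_tendsto htend (Filter.eventually_of_mem self_mem_nhdsWithin
      (fun ε hε => hεstep ε hε))
  -- let s' → s⁺ (or handle t = s directly)
  have main : f t ≤ f s * Real.exp (-(∫ τ in s..t, c τ)) := by
    rcases eq_or_lt_of_le hts with heq | hlt
    · rw [← heq]
      simp [intervalIntegral.integral_same]
    · have htend : Filter.Tendsto
          (fun s' => f s' * Real.exp ((∫ τ in s..s', c τ) - ∫ τ in s..t, c τ))
          (nhdsWithin s (Ioi s)) (nhds (f s * Real.exp (-(∫ τ in s..t, c τ)))) := by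
        have h1 : Filter.Tendsto f (nhdsWithin s (Ioi s)) (nhds (f s)) :=
          (hfcont s self_mem_Ici).mono_left (nhdsWithin_mono _ Ioi_subset_Ici_self)
        have h2 : Filter.Tendsto (fun s' => ∫ τ in s..s', c τ)
            (nhdsWithin s (Ioi s)) (nhds 0) := by
          have hP : ContinuousAt (fun s' => ∫ τ in s..s', c τ) s :=
            ((hccont.integral_hasStrictDerivAt s s).hasDerivAt).continuousAt
          have h0 : Filter.Tendsto (fun s' => ∫ τ in s..s', c τ)
              (nhdsWithin s (Ioi s)) (nhds (∫ τ in s..s, c τ)) :=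
            hP.tendsto.mono_left nhdsWithin_le_nhds
          simpa [intervalIntegral.integral_same] using h0
        have h3 : Filter.Tendsto
            (fun s' => Real.exp ((∫ τ in s..s', c τ) - ∫ τ in s..t, c τ))
            (nhdsWithin s (Ioi s)) (nhds (Real.exp (-(∫ τ in s..t, c τ)))) := by
          have h4 : Filter.Tendsto (fun s' => (∫ τ in s..s', c τ) - ∫ τ in s..t, c τ)
              (nhdsWithin s (Ioi s)) (nhds (-(∫ τ in s..t, c τ))) := by
            simpa using h2.sub_const (∫ τ in s..t, c τ)
          exact (Real.continuous_exp.tendsto _).comp h4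
        exact h1.mul h3
      apply ge_of_tendsto htend
      filter_upwards [Ioc_mem_nhdsGT_of_mem (left_mem_Ico.2 hlt)] with s' hs'
      have hadd : (∫ τ in s..s', c τ) + ∫ τ in s'..t, c τ = ∫ τ in s..t, c τ :=
        intervalIntegral.integral_add_adjacent_intervals (hcint _ _) (hcint _ _)
      have := key s' hs'.1 hs'.2
      calc f t ≤ f s' * Real.exp (-(∫ τ in s'..t, c τ)) := this
        _ = f s' * Real.exp ((∫ τ in s..s', c τ) - ∫ τ in s..t, c τ) := by
            congr 1
            exact congrArg Real.exp (by linarith)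
  -- assemble the final estimate
  have et : (⨆ i, |X t i|) = Finset.univ.sup' hne (fun i => |X t i|) :=
    (Finset.sup'_univ_eq_ciSup _).symm
  have es : (⨆ i, |X s i|) = Finset.univ.sup' hne (fun i => |X s i|) :=
    (Finset.sup'_univ_eq_ciSup _).symm
  rw [et, es]
  have hsupXs_nonneg : 0 ≤ Finset.univ.sup' hne (fun i => |X s i|) :=
    le_trans (abs_nonneg (X s (Classical.arbitrary (Fin n))))
      (Finset.le_sup' (fun i => |X s i|) (Finset.mem_univ (Classical.arbitrary (Fin n))))
  have h1 : Finset.univ.sup' hne (fun i => |X t i|) ≤ Mu * f t := by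
    apply Finset.sup'_le
    intro i _
    calc |X t i| ≤ u i * f t := habs_le t i
      _ ≤ Mu * f t := mul_le_mul_of_nonneg_right
          (Finset.le_sup' _ (Finset.mem_univ i)) (hfnonneg t)
  have h3 : f s ≤ (Finset.univ.sup' hne (fun i => |X s i|)) / mu := by
    apply Finset.sup'_le
    intro i _
    exact div_le_div₀ hsupXs_nonneg (Finset.le_sup' (fun i => |X s i|) (Finset.mem_univ i))
      hmupos (Finset.inf'_le _ (Finset.mem_univ i))
  have h4 : Real.exp (-(∫ τ in s..t, c τ)) ≤ Real.exp I * Real.exp (-(I / ω) * (t - s)) := by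
    rw [← Real.exp_add]
    apply Real.exp_le_exp.2
    have := hInt_lb s t hts
    linarith
  calc Finset.univ.sup' hne (fun i => |X t i|) ≤ Mu * f t := h1
    _ ≤ Mu * (f s * Real.exp (-(∫ τ in s..t, c τ))) :=
        mul_le_mul_of_nonneg_left main hMupos.le
    _ ≤ Mu * ((Finset.univ.sup' hne (fun i => |X s i|)) / mu *
          (Real.exp I * Real.exp (-(I / ω) * (t - s)))) := by
        apply mul_le_mul_of_nonneg_left _ hMupos.le
        exact mul_le_mul h3 h4 (Real.exp_pos _).le (div_nonneg hsupXs_nonneg hmupos.le)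
    _ = Mu / mu * Real.exp I * Real.exp (-(I / ω) * (t - s)) *
          Finset.univ.sup' hne (fun i => |X s i|) := by
        field_simp
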